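/- If X and Y are two bases of the free group F_n, then the Jacobian matrix ∂Y/∂X = (∂Y_j/∂X_i)_{j,i} is invertible over ℤF_n, with inverse ∂X/∂Y. -/

import Mathlib

/-- Two maps satisfying the Fox product rule that agree on the images of the
generators under an automorphism `e` agree everywhere. -/
lemma fox_deriv_ext (n : ℕ) (e : FreeGroup (Fin n) ≃* FreeGroup (Fin n))
    (F G : FreeGroup (Fin n) → MonoidAlgebra ℤ (FreeGroup (Fin n)))
    (hF : ∀ U V, F (U * V) = F U + MonoidAlgebra.of ℤ (FreeGroup (Fin n)) U * F V)
    (hG : ∀ U V, G (U * V) = G U + MonoidAlgebra.of ℤ (FreeGroup (Fin n)) U * G V)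
    (h : ∀ j, F (e (FreeGroup.of j)) = G (e (FreeGroup.of j))) :
    ∀ W, F W = G W := by
  have one_eq : ∀ (H : FreeGroup (Fin n) → MonoidAlgebra ℤ (FreeGroup (Fin n))),
      (∀ U V, H (U * V) = H U + MonoidAlgebra.of ℤ (FreeGroup (Fin n)) U * H V) →
      H 1 = 0 := by
    intro H hH
    have := hH 1 1
    simp only [mul_one, map_one, one_mul] at this
    exact (left_eq_add.mp this)
  have inv_eq : ∀ (H : FreeGroup (Fin n) → MonoidAlgebra ℤ (FreeGroup (Fin n))),
      (∀ U V, H (U * V) = H U + MonoidAlgebra.of ℤ (FreeGroup (Fin n)) U * H V) →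
      ∀ U, H U⁻¹ = - (MonoidAlgebra.of ℤ (FreeGroup (Fin n)) U⁻¹ * H U) := by
    intro H hH U
    have h1 := hH U⁻¹ U
    rw [inv_mul_cancel, one_eq H hH] at h1
    exact eq_neg_of_add_eq_zero_left h1.symm
  have key : ∀ V, F (e V) = G (e V) := by
    intro V
    induction V using FreeGroup.induction_on with
    | C1 => simp only [map_one, one_eq F hF, one_eq G hG]
    | of j => exact h j
    | inv_of j ih =>
        rw [map_inv, inv_eq F hF, inv_eq G hG, ih]
    | mul U V ihU ihV =>
        rw [map_mul, hF, hG, ihU, ihV]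
  intro W
  have : e (e.symm W) = W := e.apply_symm_apply W
  rw [← this]
  exact key _

/-- **Invertibility of the Jacobian matrix of a change of basis.**
Let `X` be the standard basis of `F_n` and `Y` a second basis, given as the image of
`X` under an automorphism `e`.  Let `dX i`, `dY k` be ℤ-linear maps on `ℤF_n`
satisfying the defining properties of the Fox derivatives with respect to `X`,
resp. `Y`.  Then the Jacobian matrix `∂Y/∂X = (∂Y_k/∂X_i)_{k,i}` is invertible over
`ℤF_n`, with inverse the Jacobian matrix `∂X/∂Y = (∂X_k/∂Y_i)_{k,i}`. -/
theorem fox_jacobian_invertible (n : ℕ)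
    (e : FreeGroup (Fin n) ≃* FreeGroup (Fin n))
    (dX dY : Fin n →
      MonoidAlgebra ℤ (FreeGroup (Fin n)) →ₗ[ℤ] MonoidAlgebra ℤ (FreeGroup (Fin n)))
    (hXbasis : ∀ i j : Fin n,
      dX i (MonoidAlgebra.of ℤ (FreeGroup (Fin n)) (FreeGroup.of j)) = if j = i then 1 else 0)
    (hXprod : ∀ (i : Fin n) (U V : FreeGroup (Fin n)),
      dX i (MonoidAlgebra.of ℤ (FreeGroup (Fin n)) (U * V)) =
        dX i (MonoidAlgebra.of ℤ (FreeGroup (Fin n)) U) +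
          MonoidAlgebra.of ℤ (FreeGroup (Fin n)) U *
            dX i (MonoidAlgebra.of ℤ (FreeGroup (Fin n)) V))
    (hYbasis : ∀ k j : Fin n,
      dY k (MonoidAlgebra.of ℤ (FreeGroup (Fin n)) (e (FreeGroup.of j))) =
        if j = k then 1 else 0)
    (hYprod : ∀ (k : Fin n) (U V : FreeGroup (Fin n)),
      dY k (MonoidAlgebra.of ℤ (FreeGroup (Fin n)) (U * V)) =
        dY k (MonoidAlgebra.of ℤ (FreeGroup (Fin n)) U) +
          MonoidAlgebra.of ℤ (FreeGroup (Fin n)) U *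
            dY k (MonoidAlgebra.of ℤ (FreeGroup (Fin n)) V))
    (dYdX dXdY : Matrix (Fin n) (Fin n) (MonoidAlgebra ℤ (FreeGroup (Fin n))))
    (hdYdX : ∀ k i : Fin n,
      dYdX k i = dX i (MonoidAlgebra.of ℤ (FreeGroup (Fin n)) (e (FreeGroup.of k))))
    (hdXdY : ∀ k i : Fin n,
      dXdY k i = dY i (MonoidAlgebra.of ℤ (FreeGroup (Fin n)) (FreeGroup.of k))) :
    dYdX * dXdY = 1 ∧ dXdY * dYdX = 1 := by
  set ι := MonoidAlgebra.of ℤ (FreeGroup (Fin n)) with hι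
  -- Chain rule 1 : ∂·/∂Y_j = Σ_i ∂·/∂X_i · ∂X_i/∂Y_j
  have chain1 : ∀ (j : Fin n) (W : FreeGroup (Fin n)),
      dY j (ι W) = ∑ i, dX i (ι W) * dXdY i j := by
    intro j
    apply fox_deriv_ext n (MulEquiv.refl _)
    · intro U V; exact hYprod j U V
    · intro U V
      simp only [hXprod, add_mul, Finset.sum_add_distrib, mul_assoc, ← Finset.mul_sum]
      rfl
    · intro m
      simp only [MulEquiv.refl_apply, hXbasis, hdXdY, ite_mul, one_mul, zero_mul,
        Finset.sum_ite_eq, Finset.mem_univ, if_true]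
  -- Chain rule 2 : ∂·/∂X_i = Σ_k ∂·/∂Y_k · ∂Y_k/∂X_i
  have chain2 : ∀ (i : Fin n) (W : FreeGroup (Fin n)),
      dX i (ι W) = ∑ k, dY k (ι W) * dYdX k i := by
    intro i
    apply fox_deriv_ext n e
    · intro U V; exact hXprod i U V
    · intro U V
      simp only [hYprod, add_mul, Finset.sum_add_distrib, mul_assoc, ← Finset.mul_sum]
      rfl
    · intro m
      simp only [hYbasis, ite_mul, one_mul, zero_mul, Finset.sum_ite_eq,
        Finset.mem_univ, if_true, hdYdX]
  constructor
  · ext k j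
    rw [Matrix.mul_apply, Matrix.one_apply]
    have := (chain1 j (e (FreeGroup.of k))).symm
    rw [hYbasis j k] at this
    simp only [← hdYdX] at this
    rw [this]
  · ext m i
    rw [Matrix.mul_apply, Matrix.one_apply]
    have := (chain2 i (FreeGroup.of m)).symm
    rw [hXbasis i m] at this
    simp only [← hdXdY] at this
    rw [this]
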